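/- For λ₀ ∈ P⁺ and μ ∈ P, the closed formula g^μ_{0,2λ₀} = (−1)^{(2λ₀−μ, ρ)} q^{(1/2)(2λ₀−μ, μ+ρ+(2λ₀−μ)^∨)} Π_{i=1}^n binom((λ₀, α_i), (2λ₀−μ, ω_i))_q satisfies the recursion g_{0,λ}^μ = q^{(2ω_j, λ−μ)} g_{0,λ−2ω_j}^{μ−2ω_j} − q^{(λ₀,α_j) + (2ω_j−α_j, λ−α_j−μ)} g_{0,λ−2ω_j}^{μ−2ω_j+α_j} with λ = 2λ₀, whenever (λ₀, α_j) > 0, together with the initial condition g^μ_{0,0} = δ_{μ,0}. -/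

import Mathlib

open Finset

abbrev Wt (n : ℕ) := Fin n → ℤ

def omegaW (n : ℕ) (k : ℕ) : Wt n := fun i => if (i : ℕ) + 1 = k then 1 else 0

def alphaW (n : ℕ) (k : ℕ) : Wt n := fun i =>
  if (i : ℕ) + 1 = k then 2 else if (i : ℕ) + 2 = k ∨ (i : ℕ) = k then -1 else 0

def coeffW (n : ℕ) (l : Wt n) (k : ℕ) : ℤ := ∑ i : Fin n, if (i : ℕ) + 1 = k then l i else 0

def IsDom (n : ℕ) (l : Wt n) : Prop := ∀ i, 0 ≤ l i

def IsDomOne (n : ℕ) (l : Wt n) : Prop := ∀ i, 0 ≤ l i ∧ l i ≤ 1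

def InQplus (n : ℕ) (w : Wt n) : Prop :=
  ∃ c : ℕ → ℕ, w = ∑ k ∈ Finset.Icc 1 n, (c k : ℤ) • alphaW n k

def InQ (n : ℕ) (w : Wt n) : Prop :=
  ∃ c : ℕ → ℤ, w = ∑ k ∈ Finset.Icc 1 n, c k • alphaW n k

noncomputable def formW (n : ℕ) (x y : Wt n) : ℚ :=
  ∑ i : Fin n, ∑ j : Fin n, (x i : ℚ) * (y j : ℚ) *
    ((((min i.val j.val : ℕ) : ℚ) + 1) * ((n : ℚ) + 1 - (((max i.val j.val : ℕ) : ℚ) + 1)) / ((n : ℚ) + 1))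

noncomputable def qpow (r : ℚ) : RatFunc ℚ := if r.den = 1 then RatFunc.X ^ r.num else 0

noncomputable def qint (k : ℤ) : RatFunc ℚ := (1 - RatFunc.X ^ k) / (1 - RatFunc.X)

noncomputable def qbinom (m r : ℤ) : RatFunc ℚ :=
  if 0 ≤ r ∧ r ≤ m then ∏ k ∈ Finset.range r.toNat, qint (m - (k : ℤ)) / qint ((k : ℤ) + 1) else 0

noncomputable def qbinomQ (m r : ℚ) : RatFunc ℚ :=
  if m.den = 1 ∧ r.den = 1 then qbinom m.num r.num else 0

noncomputable def negOnePow (r : ℚ) : RatFunc ℚ := if r.den = 1 then (-1 : RatFunc ℚ) ^ r.num else 0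

def rhoW (n : ℕ) : Wt n := fun _ => 1

/-- The closed formula for g^μ_{0,2λ₀}; note (η, η^∨) = Σ_i (η, ω_i)² for η ∈ Q. -/
noncomputable def gClosed (n : ℕ) (l0 mu : Wt n) : RatFunc ℚ :=
  negOnePow (formW n (2 • l0 - mu) (rhoW n)) *
    qpow ((formW n (2 • l0 - mu) (mu + rhoW n) +
      ∑ i ∈ Finset.Icc 1 n, (formW n (2 • l0 - mu) (omegaW n i)) ^ 2) / 2) *
    ∏ i ∈ Finset.Icc 1 n,
      qbinomQ (formW n l0 (alphaW n i)) (formW n (2 • l0 - mu) (omegaW n i))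

open Finset

lemma formW_symm (n : ℕ) (x y : Wt n) : formW n x y = formW n y x := by
  unfold formW
  rw [Finset.sum_comm]
  refine Finset.sum_congr rfl fun i _ => Finset.sum_congr rfl fun j _ => ?_
  rw [min_comm j.val i.val, max_comm j.val i.val]; ring

lemma formW_add_right (n : ℕ) (x y z : Wt n) :
    formW n x (y + z) = formW n x y + formW n x z := by
  unfold formW
  rw [← Finset.sum_add_distrib]
  refine Finset.sum_congr rfl fun i _ => ?_
  rw [← Finset.sum_add_distrib]
  refine Finset.sum_congr rfl fun j _ => ?_
  simp only [Pi.add_apply, Int.cast_add]; ring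

lemma formW_neg_right (n : ℕ) (x y : Wt n) :
    formW n x (-y) = - formW n x y := by
  unfold formW
  rw [← Finset.sum_neg_distrib]
  refine Finset.sum_congr rfl fun i _ => ?_
  rw [← Finset.sum_neg_distrib]
  refine Finset.sum_congr rfl fun j _ => ?_
  simp only [Pi.neg_apply, Int.cast_neg]; ring

lemma formW_sub_right (n : ℕ) (x y z : Wt n) :
    formW n x (y - z) = formW n x y - formW n x z := by
  rw [sub_eq_add_neg, formW_add_right, formW_neg_right, sub_eq_add_neg]

lemma formW_zero_right (n : ℕ) (x : Wt n) : formW n x 0 = 0 := by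
  unfold formW
  simp

lemma formW_zsmul_right (n : ℕ) (c : ℤ) (x y : Wt n) :
    formW n x (c • y) = (c : ℚ) * formW n x y := by
  unfold formW
  rw [Finset.mul_sum]
  refine Finset.sum_congr rfl fun i _ => ?_
  rw [Finset.mul_sum]
  refine Finset.sum_congr rfl fun j _ => ?_
  simp only [Pi.smul_apply, smul_eq_mul, Int.cast_mul]; ring

lemma formW_two_nsmul_right (n : ℕ) (x y : Wt n) :
    formW n x ((2:ℕ) • y) = 2 * formW n x y := by
  have : (2:ℕ) • y = (2:ℤ) • y := by ext i; simp
  rw [this, formW_zsmul_right]; norm_num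
lemma formW_sum_right (n : ℕ) (x : Wt n) (s : Finset ℕ) (c : ℕ → ℤ) (v : ℕ → Wt n) :
    formW n x (∑ k ∈ s, c k • v k) = ∑ k ∈ s, (c k : ℚ) * formW n x (v k) := by
  classical
  induction s using Finset.induction_on with
  | empty => simp [formW_zero_right]
  | insert _ _ h ih =>
    rw [Finset.sum_insert h, Finset.sum_insert h, formW_add_right, formW_zsmul_right, ih]

lemma coeffW_apply (n : ℕ) (w : Wt n) (k : ℕ) (h1 : 1 ≤ k) (h2 : k ≤ n) :
    coeffW n w k = w ⟨k - 1, by omega⟩ := by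
  unfold coeffW
  rw [Finset.sum_eq_single (⟨k - 1, by omega⟩ : Fin n)]
  · simp; omega
  · intro b _ hb
    have : (b : ℕ) + 1 ≠ k := by
      intro hc; apply hb; apply Fin.ext; simp; omega
    simp [this]
  · simp

lemma decompW (n : ℕ) (w : Wt n) :
    w = ∑ k ∈ Finset.Icc 1 n, coeffW n w k • omegaW n k := by
  funext i
  rw [Finset.sum_apply]
  rw [Finset.sum_eq_single ((i : ℕ) + 1)]
  · rw [coeffW_apply n w ((i:ℕ)+1) (by omega) (by omega)]
    simp [omegaW]
  · intro b _ hb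
    simp [omegaW, Ne.symm hb]
  · intro h
    exfalso; apply h; simp [Finset.mem_Icc]
noncomputable def Cq (n i m : ℕ) : ℚ :=
  (((min i m : ℕ) : ℚ) + 1) * ((n : ℚ) + 1 - (((max i m : ℕ) : ℚ) + 1)) / ((n : ℚ) + 1)

lemma cartan_key (n i j : ℕ) (hi : i < n) (hj1 : 1 ≤ j) (hjn : j ≤ n) :
    2 * Cq n i (j-1) - (if 2 ≤ j then Cq n i (j-2) else 0) - (if j < n then Cq n i j else 0)
      = if i + 1 = j then 1 else 0 := by
  have hn : ((n : ℚ) + 1) ≠ 0 := by positivity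
  unfold Cq
  rcases Nat.lt_trichotomy (i+1) j with h | h | h
  · -- i + 2 ≤ j
    have e1 : min i (j-1) = i := by omega
    have e2 : max i (j-1) = j-1 := by omega
    have e3 : min i (j-2) = i := by omega
    have e4 : max i (j-2) = j-2 := by omega
    have e5 : min i j = i := by omega
    have e6 : max i j = j := by omega
    rw [e1, e2, e3, e4, e5, e6]
    have h2 : 2 ≤ j := by omega
    rw [if_pos h2, if_neg (by omega : ¬ i + 1 = j)]
    by_cases hjlt : j < n
    · rw [if_pos hjlt]
      have c1 : ((j - 1 : ℕ) : ℚ) = (j : ℚ) - 1 := by push_cast [Nat.cast_sub (by omega : 1 ≤ j)]; ring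
      have c2 : ((j - 2 : ℕ) : ℚ) = (j : ℚ) - 2 := by push_cast [Nat.cast_sub h2]; ring
      rw [c1, c2]; field_simp; ring
    · rw [if_neg hjlt]
      have hjen : j = n := by omega
      subst hjen
      have c1 : ((j - 1 : ℕ) : ℚ) = (j : ℚ) - 1 := by push_cast [Nat.cast_sub (by omega : 1 ≤ j)]; ring
      have c2 : ((j - 2 : ℕ) : ℚ) = (j : ℚ) - 2 := by push_cast [Nat.cast_sub h2]; ring
      rw [c1, c2]; field_simp; ring
  · -- i + 1 = j
    have e1 : min i (j-1) = j-1 := by omega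
    have e2 : max i (j-1) = j-1 := by omega
    have e5 : min i j = i := by omega
    have e6 : max i j = j := by omega
    rw [e1, e2, e5, e6, if_pos h]
    have c1 : ((j - 1 : ℕ) : ℚ) = (j : ℚ) - 1 := by push_cast [Nat.cast_sub (by omega : 1 ≤ j)]; ring
    have ci : (i : ℚ) = (j : ℚ) - 1 := by
      have : (i : ℚ) + 1 = (j : ℚ) := by exact_mod_cast congrArg (Nat.cast (R := ℚ)) h
      linarith
    by_cases h2 : 2 ≤ j
    · have e3 : min i (j-2) = j-2 := by omega
      have e4 : max i (j-2) = j-1 := by omega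
      rw [if_pos h2, e3, e4]
      have c2 : ((j - 2 : ℕ) : ℚ) = (j : ℚ) - 2 := by push_cast [Nat.cast_sub h2]; ring
      rw [c1, c2, ci]
      by_cases hjlt : j < n
      · rw [if_pos hjlt]; field_simp; ring
      · rw [if_neg hjlt]
        have : j = n := by omega
        subst this; field_simp; ring
    · rw [if_neg h2]
      have hj1' : j = 1 := by omega
      subst hj1'
      rw [c1, ci]
      by_cases hjlt : 1 < n
      · rw [if_pos hjlt]; field_simp; ring
      · rw [if_neg hjlt]
        have : n = 1 := by omega
        subst this; norm_num
  · -- j ≤ i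
    have hjlt : j < n := by omega
    have e1 : min i (j-1) = j-1 := by omega
    have e2 : max i (j-1) = i := by omega
    have e5 : min i j = j := by omega
    have e6 : max i j = i := by omega
    rw [e1, e2, e5, e6, if_pos hjlt, if_neg (by omega : ¬ i + 1 = j)]
    have c1 : ((j - 1 : ℕ) : ℚ) = (j : ℚ) - 1 := by push_cast [Nat.cast_sub (by omega : 1 ≤ j)]; ring
    by_cases h2 : 2 ≤ j
    · have e3 : min i (j-2) = j-2 := by omega
      have e4 : max i (j-2) = i := by omega
      rw [if_pos h2, e3, e4]
      have c2 : ((j - 2 : ℕ) : ℚ) = (j : ℚ) - 2 := by push_cast [Nat.cast_sub h2]; ring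
      rw [c1, c2]; field_simp; ring
    · rw [if_neg h2]
      have hj1' : j = 1 := by omega
      subst hj1'
      rw [c1]; field_simp; ring
lemma fin_sum_ite (n a : ℕ) (f : ℕ → ℚ) :
    ∑ m : Fin n, (if (m : ℕ) = a then f (m : ℕ) else 0) = if a < n then f a else 0 := by
  rw [Fin.sum_univ_eq_sum_range (fun m => if m = a then f m else 0) n,
    Finset.sum_ite_eq' (Finset.range n) a f]
  simp [Finset.mem_range]

lemma alpha_row_sum (n : ℕ) (i : Fin n) (j : ℕ) (hj1 : 1 ≤ j) (hjn : j ≤ n) :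
    ∑ m : Fin n, (alphaW n j m : ℚ) * Cq n (i : ℕ) (m : ℕ)
      = if (i : ℕ) + 1 = j then 1 else 0 := by
  have step : ∀ m : Fin n, (alphaW n j m : ℚ) * Cq n (i : ℕ) (m : ℕ)
      = (if (m : ℕ) = j - 1 then 2 * Cq n (i:ℕ) (m:ℕ) else 0)
        + (if (m : ℕ) = j - 2 ∧ 2 ≤ j then -(Cq n (i:ℕ) (m:ℕ)) else 0)
        + (if (m : ℕ) = j then -(Cq n (i:ℕ) (m:ℕ)) else 0) := by
    intro m
    unfold alphaW
    split_ifs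
    all_goals try (exfalso; omega)
    all_goals (push_cast; ring)
  rw [Finset.sum_congr rfl (fun m _ => step m), Finset.sum_add_distrib,
    Finset.sum_add_distrib]
  have s1 : ∑ m : Fin n, (if (m : ℕ) = j - 1 then 2 * Cq n (i:ℕ) (m:ℕ) else 0)
      = 2 * Cq n (i:ℕ) (j-1) := by
    rw [fin_sum_ite n (j-1) (fun m => 2 * Cq n (i:ℕ) m), if_pos (by omega : j - 1 < n)]
  have s2 : ∑ m : Fin n, (if (m : ℕ) = j - 2 ∧ 2 ≤ j then -(Cq n (i:ℕ) (m:ℕ)) else 0)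
      = - (if 2 ≤ j then Cq n (i:ℕ) (j-2) else 0) := by
    by_cases h2 : 2 ≤ j
    · rw [if_pos h2]
      have hcong : ∀ m : Fin n, (if (m:ℕ) = j - 2 ∧ 2 ≤ j then -(Cq n (i:ℕ) (m:ℕ)) else 0)
          = (if (m:ℕ) = j - 2 then -(Cq n (i:ℕ) (m:ℕ)) else 0) := fun m => by simp [h2]
      rw [Finset.sum_congr rfl (fun m _ => hcong m),
        fin_sum_ite n (j-2) (fun m => -(Cq n (i:ℕ) m)), if_pos (by omega : j - 2 < n)]
    · simp [h2]
  have s3 : ∑ m : Fin n, (if (m : ℕ) = j then -(Cq n (i:ℕ) (m:ℕ)) else 0)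
      = - (if j < n then Cq n (i:ℕ) j else 0) := by
    rw [fin_sum_ite n j (fun m => -(Cq n (i:ℕ) m))]
    by_cases hj : j < n <;> simp [hj]
  rw [s1, s2, s3]
  have := cartan_key n (i:ℕ) j i.isLt hj1 hjn
  linarith [this]

lemma formW_alpha (n : ℕ) (x : Wt n) (j : ℕ) (hj1 : 1 ≤ j) (hjn : j ≤ n) :
    formW n x (alphaW n j) = (coeffW n x j : ℚ) := by
  unfold formW
  have key : ∀ i : Fin n, ∑ m : Fin n, (x i : ℚ) * (alphaW n j m : ℚ) *
      ((((min i.val m.val : ℕ) : ℚ) + 1) * ((n : ℚ) + 1 - (((max i.val m.val : ℕ) : ℚ) + 1)) / ((n : ℚ) + 1))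
      = (x i : ℚ) * (if (i : ℕ) + 1 = j then 1 else 0) := by
    intro i
    rw [← alpha_row_sum n i j hj1 hjn, Finset.mul_sum]
    refine Finset.sum_congr rfl fun m _ => ?_
    unfold Cq; ring
  rw [Finset.sum_congr rfl (fun i _ => key i)]
  rw [coeffW_apply n x j hj1 hjn]
  rw [Finset.sum_eq_single (⟨j - 1, by omega⟩ : Fin n)]
  · simp; intro h; omega
  · intro b _ hb
    rw [if_neg (by intro hc; apply hb; apply Fin.ext; simp; omega), mul_zero]
  · simp
lemma X_pow_ne_one (t : ℕ) (ht : 1 ≤ t) : (RatFunc.X : RatFunc ℚ) ^ t ≠ 1 := by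
  intro h
  rw [← RatFunc.algebraMap_X (K := ℚ), ← map_pow, ← map_one (algebraMap (Polynomial ℚ) (RatFunc ℚ))] at h
  have h2 := RatFunc.algebraMap_injective (K := ℚ) h
  have := congrArg Polynomial.natDegree h2
  simp [Polynomial.natDegree_X_pow] at this
  omega

lemma one_sub_X_zpow_ne_zero (k : ℤ) (hk : 1 ≤ k) :
    (1 - RatFunc.X ^ k : RatFunc ℚ) ≠ 0 := by
  have hkt : k = (k.toNat : ℤ) := by omega
  rw [hkt, zpow_natCast]
  exact sub_ne_zero.mpr (Ne.symm (X_pow_ne_one k.toNat (by omega)))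

lemma one_sub_X_ne_zero : (1 - RatFunc.X : RatFunc ℚ) ≠ 0 := by
  have := one_sub_X_zpow_ne_zero 1 le_rfl
  rwa [zpow_one] at this

lemma qint_ne_zero (k : ℤ) (hk : 1 ≤ k) : qint k ≠ 0 :=
  div_ne_zero (one_sub_X_zpow_ne_zero k hk) one_sub_X_ne_zero

lemma qint_split (m r : ℤ) : qint m = RatFunc.X ^ r * qint (m - r) + qint r := by
  unfold qint
  rw [mul_div_assoc', ← add_div]
  congr 1
  have hXm : (RatFunc.X : RatFunc ℚ) ^ r * RatFunc.X ^ (m - r) = RatFunc.X ^ m := by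
    rw [← zpow_add₀ (RatFunc.X_ne_zero (K := ℚ))]
    congr 1; ring
  rw [mul_sub, mul_one, hXm]; ring

lemma qbinom_self (N : ℤ) (hN : 0 ≤ N) : qbinom N N = 1 := by
  unfold qbinom
  rw [if_pos ⟨hN, le_rfl⟩, Finset.prod_div_distrib]
  have h1 : ∏ k ∈ Finset.range N.toNat, qint (N - (k : ℤ))
      = ∏ k ∈ Finset.range N.toNat, qint ((k : ℤ) + 1) := by
    rw [← Finset.prod_range_reflect (fun k => qint ((k:ℤ)+1)) N.toNat]
    refine Finset.prod_congr rfl fun k hk => ?_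
    rw [Finset.mem_range] at hk
    congr 1
    push_cast [Nat.cast_sub (by omega : k + 1 ≤ N.toNat)]
    omega
  rw [h1]
  exact div_self (Finset.prod_ne_zero_iff.mpr fun k _ => qint_ne_zero _ (by omega))

lemma qbinom_pascal (m r : ℤ) (hm : 1 ≤ m) :
    qbinom m r = RatFunc.X ^ r * qbinom (m-1) r + qbinom (m-1) (r-1) := by
  rcases lt_trichotomy r 0 with hr | hr | hr
  · unfold qbinom
    rw [if_neg (by omega), if_neg (by omega), if_neg (by omega)]
    simp
  · subst hr
    unfold qbinom
    rw [if_pos (by omega), if_pos (by omega), if_neg (by omega)]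
    simp
  · rcases lt_trichotomy m r with hmr | hmr | hmr
    · unfold qbinom
      rw [if_neg (by omega), if_neg (by omega), if_neg (by omega)]
      simp
    · subst hmr
      rw [qbinom_self m (by omega), qbinom_self (m-1) (by omega)]
      unfold qbinom
      rw [if_neg (by omega)]
      simp
    · have ht1 : r.toNat = (r.toNat - 1) + 1 := by omega
      set t : ℕ := r.toNat - 1 with htdef
      have hrt : r = (t : ℤ) + 1 := by omega
      set A : RatFunc ℚ := ∏ k ∈ Finset.range t, qint (m - 1 - (k:ℤ)) with hA
      set B : RatFunc ℚ := ∏ k ∈ Finset.range t, qint ((k:ℤ) + 1) with hB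
      have hBne : B ≠ 0 :=
        Finset.prod_ne_zero_iff.mpr fun k _ => qint_ne_zero _ (by omega)
      have hqr : qint r ≠ 0 := qint_ne_zero r (by omega)
      have num1 : ∏ k ∈ Finset.range (t+1), qint (m - (k:ℤ)) = qint m * A := by
        rw [Finset.prod_range_succ']
        have hc : ∀ k ∈ Finset.range t, qint (m - ((k+1 : ℕ):ℤ)) = qint (m - 1 - (k:ℤ)) := by
          intro k _; congr 1; push_cast; ring
        rw [Finset.prod_congr rfl hc, Nat.cast_zero, sub_zero, mul_comm]
      have den1 : ∏ k ∈ Finset.range (t+1), qint ((k:ℤ) + 1) = B * qint r := by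
        rw [Finset.prod_range_succ]
        congr 1
        rw [hrt]
      have num2 : ∏ k ∈ Finset.range (t+1), qint (m - 1 - (k:ℤ)) = A * qint (m - r) := by
        rw [Finset.prod_range_succ]
        congr 1
        rw [hrt]; congr 1; ring
      have e1 : qbinom m r = qint m * A / (B * qint r) := by
        unfold qbinom
        rw [if_pos ⟨by omega, by omega⟩, Finset.prod_div_distrib, ht1, num1, den1]
      have e3 : qbinom (m-1) r = A * qint (m - r) / (B * qint r) := by
        unfold qbinom
        rw [if_pos ⟨by omega, by omega⟩, Finset.prod_div_distrib, ht1, num2, den1]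
      have e4 : qbinom (m-1) (r-1) = A / B := by
        unfold qbinom
        rw [if_pos ⟨by omega, by omega⟩, Finset.prod_div_distrib]
        have htn : (r-1).toNat = t := by omega
        rw [htn]
      rw [e1, e3, e4, qint_split m r]
      field_simp
lemma den_one_iff (q : ℚ) : q.den = 1 ↔ ∃ z : ℤ, q = (z : ℚ) := by
  constructor
  · intro h
    exact ⟨q.num, by rw [← Rat.num_div_den q, h]; simp⟩
  · rintro ⟨z, rfl⟩
    exact Rat.den_intCast z

lemma qpow_int (z : ℤ) : qpow ((z : ℚ)) = RatFunc.X ^ z := by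
  unfold qpow
  rw [if_pos (Rat.den_intCast z), Rat.num_intCast]

lemma qpow_nonint (q : ℚ) (h : q.den ≠ 1) : qpow q = 0 := if_neg h

lemma negOnePow_int (z : ℤ) : negOnePow ((z : ℚ)) = (-1 : RatFunc ℚ) ^ z := by
  unfold negOnePow
  rw [if_pos (Rat.den_intCast z), Rat.num_intCast]

lemma qbinomQ_int (a b : ℤ) : qbinomQ (a : ℚ) (b : ℚ) = qbinom a b := by
  unfold qbinomQ
  rw [if_pos ⟨Rat.den_intCast a, Rat.den_intCast b⟩, Rat.num_intCast, Rat.num_intCast]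

lemma qbinomQ_nonint (x q : ℚ) (h : q.den ≠ 1) : qbinomQ x q = 0 := by
  unfold qbinomQ
  rw [if_neg (by tauto)]

lemma coeff_omega (n k i : ℕ) (hi1 : 1 ≤ i) (hi2 : i ≤ n) :
    coeffW n (omegaW n k) i = if i = k then 1 else 0 := by
  rw [coeffW_apply n _ i hi1 hi2]
  unfold omegaW
  dsimp only
  split_ifs <;> first | rfl | omega

lemma coeff_rho (n i : ℕ) (hi1 : 1 ≤ i) (hi2 : i ≤ n) : coeffW n (rhoW n) i = 1 := by
  rw [coeffW_apply n _ i hi1 hi2]; rfl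

lemma coeff_alpha_self (n j : ℕ) (hj1 : 1 ≤ j) (hjn : j ≤ n) :
    coeffW n (alphaW n j) j = 2 := by
  rw [coeffW_apply n _ j hj1 hjn]
  unfold alphaW
  dsimp only
  rw [if_pos (by omega)]

lemma formW_zero_left (n : ℕ) (y : Wt n) : formW n 0 y = 0 := by
  rw [formW_symm, formW_zero_right]

lemma formW_sub_alpha (n : ℕ) (x y : Wt n) (j : ℕ) :
    formW n (x - alphaW n j) y = formW n x y - formW n y (alphaW n j) := by
  rw [formW_symm n (x - alphaW n j) y, formW_sub_right, formW_symm n y x]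

lemma formW_rho_sum (n : ℕ) (x : Wt n) :
    formW n x (rhoW n) = ∑ i ∈ Finset.Icc 1 n, formW n x (omegaW n i) := by
  have hd := decompW n (rhoW n)
  calc formW n x (rhoW n) = formW n x (∑ k ∈ Finset.Icc 1 n, coeffW n (rhoW n) k • omegaW n k) := by
        rw [← hd]
    _ = ∑ k ∈ Finset.Icc 1 n, (coeffW n (rhoW n) k : ℚ) * formW n x (omegaW n k) := by
        rw [formW_sum_right]
    _ = ∑ i ∈ Finset.Icc 1 n, formW n x (omegaW n i) := by
        refine Finset.sum_congr rfl fun k hk => ?_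
        rw [Finset.mem_Icc] at hk
        rw [coeff_rho n k hk.1 hk.2]
        simp
lemma qpow_zero' : qpow 0 = 1 := by
  have := qpow_int 0
  simpa using this

lemma negOnePow_zero' : negOnePow 0 = 1 := by
  have := negOnePow_int 0
  simpa using this

lemma qbinomQ_zero_zero : qbinomQ 0 0 = 1 := by
  have := qbinomQ_int 0 0
  simp only [Int.cast_zero] at this
  rw [this]
  unfold qbinom
  rw [if_pos ⟨le_rfl, le_rfl⟩]
  simp

lemma main_identity (n j : ℕ) (hj : j ∈ Finset.Icc 1 n)
    (mq rq : ℕ → ℚ) (M : ℕ → ℤ)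
    (hm : ∀ i ∈ Finset.Icc 1 n, mq i = (M i : ℚ))
    (hMj : 1 ≤ M j)
    (S E p2 : ℚ)
    (hS : S = ∑ i ∈ Finset.Icc 1 n, rq i)
    (hp2 : ∃ z : ℤ, p2 = 2 * rq j + (z : ℚ)) :
    negOnePow S * qpow E * (∏ i ∈ Finset.Icc 1 n, qbinomQ (mq i) (rq i))
      = qpow (2 * rq j) * (negOnePow S * qpow (E - rq j) *
          (∏ i ∈ Finset.Icc 1 n, qbinomQ (mq i - (if i = j then 1 else 0)) (rq i)))
        - qpow p2 * (negOnePow (S - 1) * qpow (E - p2) *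
          (∏ i ∈ Finset.Icc 1 n, qbinomQ (mq i - (if i = j then 1 else 0))
            (rq i - (if i = j then 1 else 0)))) := by
  classical
  by_cases hA : ∀ i ∈ Finset.Icc 1 n, ∃ z : ℤ, rq i = (z : ℚ)
  · -- all rq i integral
    have hR : ∀ i ∈ Finset.Icc 1 n, rq i = (((rq i).num : ℤ) : ℚ) := by
      intro i hi
      obtain ⟨z, hz⟩ := hA i hi
      rw [hz, Rat.num_intCast]
    set R : ℕ → ℤ := fun i => (rq i).num with hRdef
    have hrj : rq j = ((R j : ℤ) : ℚ) := hR j hj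
    have hSz : S = ((∑ i ∈ Finset.Icc 1 n, R i : ℤ) : ℚ) := by
      rw [hS]
      push_cast
      exact Finset.sum_congr rfl hR
    obtain ⟨zp, hzp⟩ := hp2
    have hp2' : p2 = ((2 * R j + zp : ℤ) : ℚ) := by
      rw [hzp, hrj]; push_cast; ring
    by_cases hE : E.den = 1
    · -- genuine case
      obtain ⟨ze, hze⟩ := (den_one_iff E).mp hE
      set zs := ∑ i ∈ Finset.Icc 1 n, R i with hzs
      -- rewrite products
      have hP0 : (∏ i ∈ Finset.Icc 1 n, qbinomQ (mq i) (rq i))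
          = ∏ i ∈ Finset.Icc 1 n, qbinom (M i) (R i) := by
        refine Finset.prod_congr rfl fun i hi => ?_
        rw [hm i hi, hR i hi, qbinomQ_int]
      have hcast : ∀ i : ℕ, ((if i = j then (1:ℤ) else 0 : ℤ) : ℚ) = (if i = j then (1:ℚ) else 0) := by
        intro i; split_ifs <;> simp
      have hP1 : (∏ i ∈ Finset.Icc 1 n, qbinomQ (mq i - (if i = j then 1 else 0)) (rq i))
          = ∏ i ∈ Finset.Icc 1 n, qbinom (M i - (if i = j then 1 else 0)) (R i) := by
        refine Finset.prod_congr rfl fun i hi => ?_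
        rw [hm i hi, hR i hi, ← hcast i, ← Int.cast_sub, qbinomQ_int]
      have hP2 : (∏ i ∈ Finset.Icc 1 n, qbinomQ (mq i - (if i = j then 1 else 0))
            (rq i - (if i = j then 1 else 0)))
          = ∏ i ∈ Finset.Icc 1 n, qbinom (M i - (if i = j then 1 else 0))
              (R i - (if i = j then 1 else 0)) := by
        refine Finset.prod_congr rfl fun i hi => ?_
        rw [hm i hi, hR i hi, ← hcast i, ← Int.cast_sub, ← Int.cast_sub, qbinomQ_int]
      -- split products at j
      have hsplit : ∀ f : ℕ → RatFunc ℚ, (∏ i ∈ Finset.Icc 1 n, f i)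
          = f j * ∏ i ∈ (Finset.Icc 1 n).erase j, f i :=
        fun f => (Finset.mul_prod_erase _ f hj).symm
      have hQ1 : (∏ i ∈ (Finset.Icc 1 n).erase j, qbinom (M i - (if i = j then 1 else 0)) (R i))
          = ∏ i ∈ (Finset.Icc 1 n).erase j, qbinom (M i) (R i) := by
        refine Finset.prod_congr rfl fun i hi => ?_
        rw [if_neg (Finset.ne_of_mem_erase hi), sub_zero]
      have hQ2 : (∏ i ∈ (Finset.Icc 1 n).erase j, qbinom (M i - (if i = j then 1 else 0))
            (R i - (if i = j then 1 else 0)))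
          = ∏ i ∈ (Finset.Icc 1 n).erase j, qbinom (M i) (R i) := by
        refine Finset.prod_congr rfl fun i hi => ?_
        rw [if_neg (Finset.ne_of_mem_erase hi), sub_zero, sub_zero]
      -- rewrite exponents
      have c1 : E - rq j = ((ze - R j : ℤ) : ℚ) := by rw [hze, hrj]; push_cast; ring
      have c2 : (2 : ℚ) * rq j = ((2 * R j : ℤ) : ℚ) := by rw [hrj]; push_cast; ring
      have c3 : E - p2 = ((ze - (2 * R j + zp) : ℤ) : ℚ) := by rw [hze, hp2']; push_cast; ring
      have c4 : S - 1 = ((zs - 1 : ℤ) : ℚ) := by rw [hSz]; push_cast; ring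
      rw [hP0, hP1, hP2, c1, c3, c2, c4, hp2', hze, hSz,
        qpow_int, qpow_int, qpow_int, qpow_int, qpow_int, negOnePow_int, negOnePow_int,
        hsplit (fun i => qbinom (M i) (R i)),
        hsplit (fun i => qbinom (M i - (if i = j then 1 else 0)) (R i)),
        hsplit (fun i => qbinom (M i - (if i = j then 1 else 0)) (R i - (if i = j then 1 else 0)))]
      rw [hQ1, hQ2, if_pos rfl]
      rw [qbinom_pascal (M j) (R j) hMj]
      -- pure field algebra
      have hXne : (RatFunc.X : RatFunc ℚ) ≠ 0 := RatFunc.X_ne_zero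
      have k1 : (RatFunc.X : RatFunc ℚ) ^ (2 * R j) = RatFunc.X ^ (R j) * RatFunc.X ^ (R j) := by
        rw [← zpow_add₀ hXne]; congr 1; ring
      have k2 : (RatFunc.X : RatFunc ℚ) ^ (ze - R j) = RatFunc.X ^ ze / RatFunc.X ^ (R j) :=
        zpow_sub₀ hXne ze (R j)
      have k3 : (RatFunc.X : RatFunc ℚ) ^ (2 * R j + zp)
          = RatFunc.X ^ (R j) * RatFunc.X ^ (R j) * RatFunc.X ^ zp := by
        rw [← zpow_add₀ hXne, ← zpow_add₀ hXne]; congr 1; ring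
      have k4 : (RatFunc.X : RatFunc ℚ) ^ (ze - (2 * R j + zp))
          = RatFunc.X ^ ze / (RatFunc.X ^ (R j) * RatFunc.X ^ (R j) * RatFunc.X ^ zp) := by
        rw [← k3, zpow_sub₀ hXne]
      have k5 : ((-1 : RatFunc ℚ)) ^ (zs - 1) = -(-1 : RatFunc ℚ) ^ zs := by
        rw [zpow_sub₀ (by norm_num : (-1 : RatFunc ℚ) ≠ 0), zpow_one, div_neg, div_one]
      rw [k1, k2, k3, k4, k5]
      have hT : (RatFunc.X : RatFunc ℚ) ^ (R j) ≠ 0 := zpow_ne_zero _ hXne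
      have hU : (RatFunc.X : RatFunc ℚ) ^ zp ≠ 0 := zpow_ne_zero _ hXne
      field_simp
      ring
    · -- E not integral : everything vanishes via qpow
      have h1 : qpow E = 0 := qpow_nonint E hE
      have h2 : qpow (E - rq j) = 0 := by
        apply qpow_nonint
        intro hden
        obtain ⟨z, hz⟩ := (den_one_iff _).mp hden
        apply hE
        rw [den_one_iff]
        exact ⟨z + R j, by push_cast; linarith [hz, hrj]⟩
      have h3 : qpow (E - p2) = 0 := by
        apply qpow_nonint
        intro hden
        obtain ⟨z, hz⟩ := (den_one_iff _).mp hden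
        apply hE
        rw [den_one_iff]
        have hp2c : p2 = 2 * ((R j : ℤ) : ℚ) + ((zp : ℤ) : ℚ) := by
          rw [hp2']; push_cast; ring
        exact ⟨z + (2 * R j + zp), by push_cast; linarith [hz, hp2c]⟩
      rw [h1, h2, h3]
      ring
  · -- some rq i0 not integral : all binomial products vanish
    push_neg at hA
    obtain ⟨i0, hi0, h0⟩ := hA
    have hden : (rq i0).den ≠ 1 := by
      intro h
      obtain ⟨z, hz⟩ := (den_one_iff _).mp h
      exact h0 z hz
    have hden' : (rq i0 - (if i0 = j then 1 else 0)).den ≠ 1 := by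
      intro h
      obtain ⟨z, hz⟩ := (den_one_iff _).mp h
      by_cases hij : i0 = j
      · rw [if_pos hij] at hz
        exact h0 (z + 1) (by push_cast; linarith [hz])
      · rw [if_neg hij, sub_zero] at hz
        exact h0 z hz
    rw [Finset.prod_eq_zero hi0 (qbinomQ_nonint _ _ hden),
      Finset.prod_eq_zero hi0 (qbinomQ_nonint _ _ hden),
      Finset.prod_eq_zero hi0 (qbinomQ_nonint _ _ hden')]
    ring

/-- the closed formula satisfies the recursion and initial condition. -/
theorem gClosed_recursion (n : ℕ) :
    (∀ mu : Wt n, gClosed n 0 mu = if mu = 0 then 1 else 0) ∧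
    (∀ (l0 mu : Wt n) (j : ℕ), IsDom n l0 → 1 ≤ j → j ≤ n →
      0 < formW n l0 (alphaW n j) →
      gClosed n l0 mu =
        qpow (formW n (2 • omegaW n j) (2 • l0 - mu)) *
          gClosed n (l0 - omegaW n j) (mu - 2 • omegaW n j) -
        qpow (formW n l0 (alphaW n j) +
            formW n (2 • omegaW n j - alphaW n j) (2 • l0 - alphaW n j - mu)) *
          gClosed n (l0 - omegaW n j) (mu - 2 • omegaW n j + alphaW n j)) := by
  constructor
  · -- initial condition
    intro mu
    have h0 : (2 • (0 : Wt n) - mu) = -mu := by rw [smul_zero, zero_sub]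
    simp only [gClosed, h0]
    by_cases hmu : mu = 0
    · subst hmu
      rw [if_pos rfl, neg_zero]
      simp only [formW_zero_left]
      rw [negOnePow_zero']
      norm_num [qpow_zero', qbinomQ_zero_zero]
    · rw [if_neg hmu]
      have hex : ∃ i ∈ Finset.Icc 1 n, formW n (-mu) (omegaW n i) ≠ 0 := by
        by_contra hall
        push_neg at hall
        apply hmu
        funext p
        have hp2 : (p : ℕ) + 1 ≤ n := by omega
        have key : (coeffW n (-mu) ((p:ℕ)+1) : ℚ) = 0 := by
          rw [← formW_alpha n (-mu) ((p:ℕ)+1) (by omega) hp2]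
          calc formW n (-mu) (alphaW n ((p:ℕ)+1))
              = ∑ i ∈ Finset.Icc 1 n, (coeffW n (alphaW n ((p:ℕ)+1)) i : ℚ) *
                  formW n (-mu) (omegaW n i) := by
                conv_lhs => rw [decompW n (alphaW n ((p:ℕ)+1))]
                exact formW_sum_right n (-mu) _ _ _
            _ = 0 := by
                refine Finset.sum_eq_zero fun i hi => ?_
                rw [hall i hi, mul_zero]
        have key2 : coeffW n (-mu) ((p:ℕ)+1) = 0 := by exact_mod_cast key
        rw [coeffW_apply n (-mu) ((p:ℕ)+1) (by omega) hp2] at key2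
        have hfin : (⟨(p:ℕ)+1-1, by omega⟩ : Fin n) = p := by
          apply Fin.ext; simp
        rw [hfin] at key2
        have : -(mu p) = 0 := key2
        have : mu p = 0 := by omega
        simpa using this
      obtain ⟨i0, hi0, hne⟩ := hex
      rw [Finset.prod_eq_zero hi0, mul_zero]
      rw [formW_zero_left]
      unfold qbinomQ
      split_ifs with h
      · unfold qbinom
        rw [if_neg]
        intro ⟨ha, hb⟩
        apply hne
        have hnum : (formW n (-mu) (omegaW n i0)).num = 0 := by
          have : ((0:ℚ)).num = 0 := rfl
          omega
        exact Rat.num_eq_zero.mp hnum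
      · rfl
  · -- recursion
    intro l0 mu j hdom hj1 hjn hpos
    have hjI : j ∈ Finset.Icc 1 n := Finset.mem_Icc.mpr ⟨hj1, hjn⟩
    simp only [gClosed]
    set η := 2 • l0 - mu with hη
    have v1 : 2 • (l0 - omegaW n j) - (mu - 2 • omegaW n j) = η := by
      rw [hη]; funext p
      simp only [Pi.sub_apply, Pi.smul_apply, Pi.mul_apply, Pi.ofNat_apply, Pi.natCast_apply, Nat.cast_ofNat, smul_eq_mul, nsmul_eq_mul]
      push_cast; ring
    have v2 : 2 • (l0 - omegaW n j) - (mu - 2 • omegaW n j + alphaW n j) = η - alphaW n j := by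
      rw [hη]; funext p
      simp only [Pi.sub_apply, Pi.add_apply, Pi.smul_apply, Pi.mul_apply, Pi.ofNat_apply, Pi.natCast_apply, Nat.cast_ofNat, smul_eq_mul, nsmul_eq_mul]
      push_cast; ring
    have v3 : 2 • l0 - alphaW n j - mu = η - alphaW n j := by
      rw [hη]; funext p
      simp only [Pi.sub_apply, Pi.smul_apply, Pi.mul_apply, Pi.ofNat_apply, Pi.natCast_apply, Nat.cast_ofNat, smul_eq_mul, nsmul_eq_mul]
      push_cast; ring
    rw [v1, v2, v3]
    -- basic coefficient facts
    have hm : ∀ i ∈ Finset.Icc 1 n, formW n l0 (alphaW n i) = ((coeffW n l0 i : ℤ) : ℚ) := by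
      intro i hi; rw [Finset.mem_Icc] at hi
      exact formW_alpha n l0 i hi.1 hi.2
    have hMj : 1 ≤ coeffW n l0 j := by
      rw [formW_alpha n l0 j hj1 hjn] at hpos
      exact_mod_cast hpos
    have hcoe_eta : ((coeffW n η j : ℤ) : ℚ)
        = 2 * formW n l0 (alphaW n j) - ((coeffW n mu j : ℤ) : ℚ) := by
      rw [formW_alpha n l0 j hj1 hjn, coeffW_apply n η j hj1 hjn,
        coeffW_apply n mu j hj1 hjn, coeffW_apply n l0 j hj1 hjn, hη]
      simp only [Pi.sub_apply, Pi.smul_apply, Pi.mul_apply, Pi.ofNat_apply, Pi.natCast_apply, Nat.cast_ofNat, smul_eq_mul, nsmul_eq_mul]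
      push_cast; ring
    -- piecewise rewrites
    have e1 : formW n (2 • omegaW n j) η = 2 * formW n η (omegaW n j) := by
      rw [formW_symm, formW_two_nsmul_right]
    have e3 : formW n η (mu - 2 • omegaW n j + rhoW n)
        = formW n η (mu + rhoW n) - 2 * formW n η (omegaW n j) := by
      have hv : mu - 2 • omegaW n j + rhoW n = (mu + rhoW n) - (2:ℤ) • omegaW n j := by
        funext p
        simp only [Pi.sub_apply, Pi.add_apply, Pi.smul_apply, Pi.mul_apply, Pi.ofNat_apply, Pi.natCast_apply, Nat.cast_ofNat,
          smul_eq_mul, nsmul_eq_mul, zsmul_eq_mul, Pi.intCast_apply]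
        push_cast; ring
      rw [hv, formW_sub_right, formW_zsmul_right]
      push_cast; ring
    have e5 : formW n (η - alphaW n j) (rhoW n) = formW n η (rhoW n) - 1 := by
      rw [formW_sub_alpha, formW_alpha n (rhoW n) j hj1 hjn, coeff_rho n j hj1 hjn]
      norm_num
    have eα : ∀ i ∈ Finset.Icc 1 n, formW n (l0 - omegaW n j) (alphaW n i)
        = formW n l0 (alphaW n i) - (if i = j then 1 else 0) := by
      intro i hi; rw [Finset.mem_Icc] at hi
      rw [formW_alpha n _ i hi.1 hi.2, formW_alpha n l0 i hi.1 hi.2,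
        coeffW_apply n _ i hi.1 hi.2, coeffW_apply n l0 i hi.1 hi.2]
      have : (l0 - omegaW n j) (⟨i - 1, by omega⟩ : Fin n)
          = l0 (⟨i - 1, by omega⟩ : Fin n) - (if i = j then 1 else 0) := by
        simp only [Pi.sub_apply]
        congr 1
        unfold omegaW
        dsimp only
        split_ifs <;> first | rfl | omega
      rw [this]
      push_cast
      split_ifs <;> push_cast <;> ring
    have eω : ∀ i ∈ Finset.Icc 1 n, formW n (η - alphaW n j) (omegaW n i)
        = formW n η (omegaW n i) - (if i = j then 1 else 0) := by
      intro i hi; rw [Finset.mem_Icc] at hi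
      rw [formW_sub_alpha, formW_alpha n (omegaW n i) j hj1 hjn, coeff_omega n i j hj1 hjn]
      congr 1
      split_ifs with h1 h2 h3 <;> first | omega | simp
    have e6 : formW n l0 (alphaW n j) + formW n (2 • omegaW n j - alphaW n j) (η - alphaW n j)
        = formW n l0 (alphaW n j) + 2 * formW n η (omegaW n j) - ((coeffW n η j : ℤ) : ℚ) := by
      rw [formW_symm n (2 • omegaW n j - alphaW n j) (η - alphaW n j), formW_sub_right,
        formW_two_nsmul_right]
      have h1 : formW n (η - alphaW n j) (omegaW n j)
          = formW n η (omegaW n j) - 1 := by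
        have := eω j hjI
        rwa [if_pos rfl] at this
      have h2 : formW n (η - alphaW n j) (alphaW n j)
          = ((coeffW n η j : ℤ) : ℚ) - 2 := by
        rw [formW_sub_alpha, formW_alpha n η j hj1 hjn, formW_alpha n (alphaW n j) j hj1 hjn,
          coeff_alpha_self n j hj1 hjn]
        norm_num
      rw [h1, h2]
      ring
    have e7 : formW n (η - alphaW n j) (mu - 2 • omegaW n j + alphaW n j + rhoW n)
        = formW n η (mu + rhoW n) - 2 * formW n η (omegaW n j) + ((coeffW n η j : ℤ) : ℚ)
          - (((coeffW n mu j : ℤ) : ℚ) + 1) := by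
      rw [formW_sub_alpha]
      have hv : mu - 2 • omegaW n j + alphaW n j + rhoW n
          = ((mu + rhoW n) - (2:ℤ) • omegaW n j) + alphaW n j := by
        funext p
        simp only [Pi.sub_apply, Pi.add_apply, Pi.smul_apply, Pi.mul_apply, Pi.ofNat_apply, Pi.natCast_apply, Nat.cast_ofNat,
          smul_eq_mul, nsmul_eq_mul, zsmul_eq_mul, Pi.intCast_apply]
        push_cast; ring
      rw [hv, formW_add_right, formW_sub_right, formW_zsmul_right,
        formW_alpha n η j hj1 hjn,
        formW_alpha n _ j hj1 hjn]
      have hc : coeffW n (((mu + rhoW n) - (2:ℤ) • omegaW n j) + alphaW n j) j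
          = coeffW n mu j + 1 := by
        rw [coeffW_apply n _ j hj1 hjn, coeffW_apply n mu j hj1 hjn]
        simp only [Pi.sub_apply, Pi.add_apply, Pi.smul_apply, Pi.mul_apply, Pi.ofNat_apply, Pi.natCast_apply, Nat.cast_ofNat,
          smul_eq_mul, nsmul_eq_mul, zsmul_eq_mul, Pi.intCast_apply]
        unfold omegaW alphaW rhoW
        dsimp only
        rw [if_pos (by omega : (j - 1) + 1 = j), if_pos (by omega : (j - 1) + 1 = j)]
        ring
      rw [hc]
      push_cast; ring
    have esum : ∑ i ∈ Finset.Icc 1 n, (formW n (η - alphaW n j) (omegaW n i))^2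
        = (∑ i ∈ Finset.Icc 1 n, (formW n η (omegaW n i))^2)
          - (2 * formW n η (omegaW n j) - 1) := by
      rw [Finset.sum_congr rfl (fun i hi => by rw [eω i hi])]
      have expand : ∀ i ∈ Finset.Icc 1 n,
          (formW n η (omegaW n i) - (if i = j then 1 else 0))^2
          = (formW n η (omegaW n i))^2
            - (if i = j then 2 * formW n η (omegaW n i) - 1 else 0) := by
        intro i _; split_ifs <;> ring
      rw [Finset.sum_congr rfl expand, Finset.sum_sub_distrib,
        Finset.sum_ite_eq' (Finset.Icc 1 n) j (fun i => 2 * formW n η (omegaW n i) - 1),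
        if_pos hjI]
    have ep1 : ∏ i ∈ Finset.Icc 1 n,
          qbinomQ (formW n (l0 - omegaW n j) (alphaW n i)) (formW n η (omegaW n i))
        = ∏ i ∈ Finset.Icc 1 n,
          qbinomQ (formW n l0 (alphaW n i) - (if i = j then 1 else 0)) (formW n η (omegaW n i)) :=
      Finset.prod_congr rfl fun i hi => by rw [eα i hi]
    have ep2 : ∏ i ∈ Finset.Icc 1 n,
          qbinomQ (formW n (l0 - omegaW n j) (alphaW n i))
            (formW n (η - alphaW n j) (omegaW n i))
        = ∏ i ∈ Finset.Icc 1 n,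
          qbinomQ (formW n l0 (alphaW n i) - (if i = j then 1 else 0))
            (formW n η (omegaW n i) - (if i = j then 1 else 0)) :=
      Finset.prod_congr rfl fun i hi => by rw [eα i hi, eω i hi]
    rw [e1, e3, e5, e6, e7, esum, ep1, ep2]
    have q1 : (formW n η (mu + rhoW n) - 2 * formW n η (omegaW n j)
          + ∑ i ∈ Finset.Icc 1 n, (formW n η (omegaW n i))^2) / 2
        = ((formW n η (mu + rhoW n) + ∑ i ∈ Finset.Icc 1 n, (formW n η (omegaW n i))^2) / 2)
          - formW n η (omegaW n j) := by ring
    have q2 : ((formW n η (mu + rhoW n) - 2 * formW n η (omegaW n j)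
            + ((coeffW n η j : ℤ) : ℚ) - (((coeffW n mu j : ℤ) : ℚ) + 1))
          + ((∑ i ∈ Finset.Icc 1 n, (formW n η (omegaW n i))^2)
            - (2 * formW n η (omegaW n j) - 1))) / 2
        = ((formW n η (mu + rhoW n) + ∑ i ∈ Finset.Icc 1 n, (formW n η (omegaW n i))^2) / 2)
          - (formW n l0 (alphaW n j) + 2 * formW n η (omegaW n j) - ((coeffW n η j : ℤ) : ℚ)) := by
      rw [hcoe_eta]; ring
    rw [q1, q2]
    exact main_identity n j hjI
      (fun i => formW n l0 (alphaW n i))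
      (fun i => formW n η (omegaW n i))
      (fun i => coeffW n l0 i)
      hm hMj
      (formW n η (rhoW n))
      ((formW n η (mu + rhoW n) + ∑ i ∈ Finset.Icc 1 n, (formW n η (omegaW n i))^2) / 2)
      (formW n l0 (alphaW n j) + 2 * formW n η (omegaW n j) - ((coeffW n η j : ℤ) : ℚ))
      (formW_rho_sum n η)
      ⟨coeffW n l0 j - coeffW n η j, by rw [formW_alpha n l0 j hj1 hjn]; push_cast; ring⟩
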